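/- Let f : [N] × [D] → [M] be a (k, ε)-extractor and let S ⊆ [N] be any finite set. Then the number of elements of S that are ε-poor in S is strictly less than 2^k. -/

import Mathlib

open scoped Classical

/-- Probability that f(X_A, X_D) ∈ B, where X_A is uniform on A and X_D uniform on [D]. -/
noncomputable def extractorPr {N D M : ℕ} (f : Fin N × Fin D → Fin M)
    (A : Finset (Fin N)) (B : Finset (Fin M)) : ℝ :=
  ((A ×ˢ (Finset.univ : Finset (Fin D))).filter (fun q => f q ∈ B)).card
    / ((A.card : ℝ) * (D : ℝ))

/-- f is a (k,ε)-extractor: for every A ⊆ [N] with |A| ≥ 2^k and every B ⊆ [M],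
|Pr[f(X_A,X_D) ∈ B] - |B|/M| ≤ ε. -/
def IsExtractor {N D M : ℕ} (k : ℕ) (ε : ℝ) (f : Fin N × Fin D → Fin M) : Prop :=
  ∀ A : Finset (Fin N), 2 ^ k ≤ A.card → ∀ B : Finset (Fin M),
    |extractorPr f A B - (B.card : ℝ) / (M : ℝ)| ≤ ε

/-- y ∈ [M] is b-bad for S: |f⁻¹(y) ∩ S| > b·D·|S|/M, counting pairs (x,i) ∈ S×[D]. -/
def IsBad {N D M : ℕ} (f : Fin N × Fin D → Fin M) (S : Finset (Fin N))
    (b : ℝ) (y : Fin M) : Prop :=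
  b * (D : ℝ) * (S.card : ℝ) / (M : ℝ) <
    (((S ×ˢ (Finset.univ : Finset (Fin D))).filter (fun q => f q = y)).card : ℝ)

/-- x ∈ S is ε-poor in S: for more than a 2ε-fraction of i ∈ [D],
f(x,i) is (1/ε)-bad for S. -/
noncomputable def IsPoor {N D M : ℕ} (f : Fin N × Fin D → Fin M) (S : Finset (Fin N))
    (ε : ℝ) (x : Fin N) : Prop :=
  2 * ε * (D : ℝ) <
    ((Finset.univ.filter (fun i : Fin D => IsBad f S (1 / ε) (f (x, i)))).card : ℝ)


open Finset in
lemma card_filter_prod {α β : Type*} (A : Finset α) (T : Finset β)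
    (P : α × β → Prop) [DecidablePred P] [∀ x : α, DecidablePred (fun y => P (x, y))] :
    ((A ×ˢ T).filter P).card = ∑ x ∈ A, (T.filter (fun y => P (x, y))).card := by
  rw [Finset.card_eq_sum_card_fiberwise (f := Prod.fst) (t := A)
    (by intro q hq; simp [Finset.mem_filter, Finset.mem_product] at hq ⊢; exact hq.1.1)]
  refine Finset.sum_congr rfl fun x hx => ?_
  refine Finset.card_bij' (fun q _ => q.2) (fun i _ => (x, i)) ?_ ?_ ?_ ?_
  · intro q hq
    simp [Finset.mem_filter, Finset.mem_product] at hq ⊢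
    obtain ⟨⟨⟨_, h2⟩, h3⟩, h4⟩ := hq
    subst h4; exact ⟨h2, h3⟩
  · intro i hi
    simp [Finset.mem_filter, Finset.mem_product] at hi ⊢
    exact ⟨⟨hx, hi.1⟩, hi.2⟩
  · intro q hq
    simp [Finset.mem_filter] at hq
    obtain ⟨_, h⟩ := hq
    exact Prod.ext h.symm rfl
  · intro i hi; rfl

/-- For a (k,ε)-extractor f and any S ⊆ [N] (with 0 < ε ≤ 1/2),
fewer than 2^k elements of S are ε-poor in S. -/
theorem extractor_few_poor (N D M k : ℕ) (ε : ℝ) (hε : 0 < ε) (hε2 : ε ≤ 1 / 2)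
    (f : Fin N × Fin D → Fin M) (hf : IsExtractor k ε f) (S : Finset (Fin N)) :
    (S.filter (IsPoor f S ε)).card < 2 ^ k := by
  by_contra hcon
  push_neg at hcon
  set A := S.filter (IsPoor f S ε) with hAdef
  have hApos : 0 < A.card := lt_of_lt_of_le (Nat.pow_pos (by norm_num)) hcon
  obtain ⟨x0, hx0⟩ := Finset.card_pos.mp hApos
  have hx0S : x0 ∈ S := (Finset.mem_filter.mp hx0).1
  have hx0p : IsPoor f S ε x0 := (Finset.mem_filter.mp hx0).2
  have hD : 0 < D := by
    rcases Nat.eq_zero_or_pos D with hD0 | hD0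
    · exfalso
      unfold IsPoor at hx0p
      subst hD0
      simp at hx0p
    · exact hD0
  have hM : 0 < M := by
    have := f (x0, ⟨0, hD⟩)
    exact Fin.pos this
  set B := (Finset.univ : Finset (Fin M)).filter (IsBad f S (1/ε)) with hBdef
  have hSpos : 0 < S.card := Finset.card_pos.mpr ⟨x0, hx0S⟩
  -- count fibers over values of f on S × [D]
  have htotal : (S ×ˢ (Finset.univ : Finset (Fin D))).card
      = ∑ y : Fin M, ((S ×ˢ (Finset.univ : Finset (Fin D))).filter (fun q => f q = y)).card :=
    Finset.card_eq_sum_card_fiberwise (fun q _ => Finset.mem_univ (f q))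
  have hsumB : ∑ y ∈ B, (((S ×ˢ (Finset.univ : Finset (Fin D))).filter (fun q => f q = y)).card : ℝ)
      ≤ (S.card : ℝ) * D := by
    have h1 : ∑ y ∈ B, ((S ×ˢ (Finset.univ : Finset (Fin D))).filter (fun q => f q = y)).card
        ≤ ∑ y : Fin M, ((S ×ˢ (Finset.univ : Finset (Fin D))).filter (fun q => f q = y)).card :=
      Finset.sum_le_sum_of_subset (Finset.subset_univ B)
    have h2 := htotal ▸ h1
    rw [Finset.card_product, Finset.card_univ, Fintype.card_fin] at h2
    push_cast
    exact_mod_cast h2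
  have hBlb : (B.card : ℝ) * ((1/ε) * D * S.card / M)
      ≤ ∑ y ∈ B, (((S ×ˢ (Finset.univ : Finset (Fin D))).filter (fun q => f q = y)).card : ℝ) := by
    have := Finset.card_nsmul_le_sum B
      (fun y => (((S ×ˢ (Finset.univ : Finset (Fin D))).filter (fun q => f q = y)).card : ℝ))
      ((1/ε) * D * S.card / M)
      (fun y hy => le_of_lt ((Finset.mem_filter.mp hy).2))
    simpa [nsmul_eq_mul] using this
  have hBsmall : (B.card : ℝ) / M ≤ ε := by
    have hkey : (B.card : ℝ) * ((1/ε) * D * S.card / M) ≤ (S.card : ℝ) * D :=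
      le_trans hBlb hsumB
    have hDpos : (0:ℝ) < (D:ℝ) := by positivity
    have hSposR : (0:ℝ) < (S.card:ℝ) := by exact_mod_cast hSpos
    have hMpos : (0:ℝ) < (M:ℝ) := by positivity
    rw [div_le_iff₀ hMpos]
    have h3 : (B.card : ℝ) * (D * S.card) ≤ ε * M * (S.card * D) := by
      calc (B.card : ℝ) * (D * S.card)
          = ε * M * ((B.card : ℝ) * ((1/ε) * D * S.card / M)) := by field_simp
        _ ≤ ε * M * ((S.card : ℝ) * D) :=
            mul_le_mul_of_nonneg_left hkey (by positivity)
        _ = ε * M * (S.card * D) := by ring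
    nlinarith [mul_pos hDpos hSposR]
  -- each poor x has many i with f (x,i) ∈ B
  have hcount : (A.card : ℝ) * (2 * ε * D)
      < (((A ×ˢ (Finset.univ : Finset (Fin D))).filter (fun q => f q ∈ B)).card : ℝ) := by
    have heq : ((A ×ˢ (Finset.univ : Finset (Fin D))).filter (fun q => f q ∈ B)).card
        = ∑ x ∈ A, ((Finset.univ : Finset (Fin D)).filter (fun i => f (x, i) ∈ B)).card :=
      card_filter_prod A Finset.univ (fun q => f q ∈ B)
    rw [heq]
    push_cast
    have hlt : ∀ x ∈ A, 2 * ε * D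
        < (((Finset.univ : Finset (Fin D)).filter (fun i => f (x, i) ∈ B)).card : ℝ) := by
      intro x hx
      have hp : IsPoor f S ε x := (Finset.mem_filter.mp hx).2
      unfold IsPoor at hp
      have : ((Finset.univ : Finset (Fin D)).filter (fun i => f (x, i) ∈ B))
          = ((Finset.univ : Finset (Fin D)).filter (fun i => IsBad f S (1/ε) (f (x, i)))) := by
        apply Finset.filter_congr
        intro i _
        simp [hBdef]
      rw [this]
      exact hp
    calc (A.card : ℝ) * (2 * ε * D) = ∑ _x ∈ A, 2 * ε * D := by
          rw [Finset.sum_const, nsmul_eq_mul]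
      _ < ∑ x ∈ A, (((Finset.univ : Finset (Fin D)).filter (fun i => f (x, i) ∈ B)).card : ℝ) :=
          Finset.sum_lt_sum_of_nonempty ⟨x0, hx0⟩ hlt
  have hACpos : (0:ℝ) < (A.card : ℝ) * D := by
    have : (0:ℝ) < (A.card : ℝ) := by exact_mod_cast hApos
    positivity
  have hPr : 2 * ε < extractorPr f A B := by
    unfold extractorPr
    rw [lt_div_iff₀ hACpos]
    calc 2 * ε * ((A.card : ℝ) * D) = (A.card : ℝ) * (2 * ε * D) := by ring
      _ < _ := hcount
  have hext := hf A hcon B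
  rw [abs_le] at hext
  linarith [hext.2]
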